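/- Let t ≠ 0, ε > 0, q > 4, κ > 0, γ : ℝ → ℝ with (1/2)|γ(0)| ≤ |γ(k)| ≤ (3/2)|γ(0)| for |k| ≤ κ. Then the supremum over |k| ≤ κ of ε^q (k² + ε²)^{-q/2} |sin((1/2) t ε^{-2} k⁴ γ(k))| is at most 12 · q^{-q/2} · (q-4)^{q/2-2} · |γ(0)| · ε² |t|. -/

import Mathlib

open Real

lemma key_bound (ε q : ℝ) (hε : 0 < ε) (hq : 4 < q) (k : ℝ) :
    k ^ 4 * (k ^ 2 + ε ^ 2) ^ (-q / 2)
      ≤ 16 * q ^ (-q / 2) * (q - 4) ^ (q / 2 - 2) * ε ^ (4 - q) := by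
  have hq0 : (0:ℝ) < q := by linarith
  have hq4 : (0:ℝ) < q - 4 := by linarith
  have hε2 : (0:ℝ) < ε ^ 2 := by positivity
  set M : ℝ := 16 * q ^ (-q / 2) * (q - 4) ^ (q / 2 - 2) * ε ^ (4 - q) with hM
  have hMpos : 0 < M := by positivity
  rcases eq_or_ne k 0 with hk | hk
  · simp [hk]
    positivity
  have hx : (0:ℝ) < k ^ 2 := by positivity
  set x : ℝ := k ^ 2 with hxdef
  have hw1 : (0:ℝ) ≤ 4 / q := by positivity
  have hw2 : (0:ℝ) ≤ (q - 4) / q := by positivity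
  have hp1 : (0:ℝ) ≤ q * x / 4 := by positivity
  have hp2 : (0:ℝ) ≤ q * ε ^ 2 / (q - 4) := by positivity
  have hsum : 4 / q + (q - 4) / q = 1 := by field_simp; ring
  have hgm := Real.geom_mean_le_arith_mean2_weighted hw1 hw2 hp1 hp2 hsum
  have hrhs : 4 / q * (q * x / 4) + (q - 4) / q * (q * ε ^ 2 / (q - 4)) = x + ε ^ 2 := by
    field_simp
  rw [hrhs] at hgm
  have hq2 : (0:ℝ) ≤ q / 2 := by positivity
  have hbase : (0:ℝ) ≤ (q * x / 4) ^ (4 / q) * (q * ε ^ 2 / (q - 4)) ^ ((q - 4) / q) := by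
    positivity
  have hpow := Real.rpow_le_rpow hbase hgm hq2
  have ea : 4 / q * (q / 2) = (2:ℝ) := by field_simp; norm_num
  have eb : (q - 4) / q * (q / 2) = (q - 4) / 2 := by
    field_simp
  have hL : ((q * x / 4) ^ (4 / q) * (q * ε ^ 2 / (q - 4)) ^ ((q - 4) / q)) ^ (q / 2)
      = (q * x / 4) ^ (2:ℝ) * (q * ε ^ 2 / (q - 4)) ^ ((q - 4) / 2) := by
    rw [Real.mul_rpow (by positivity) (by positivity),
      ← Real.rpow_mul (by positivity), ← Real.rpow_mul (by positivity), ea, eb]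
  rw [hL] at hpow
  have hS : (0:ℝ) < (x + ε ^ 2) ^ (q / 2) := by positivity
  have hneg : (x + ε ^ 2) ^ (-q / 2) = ((x + ε ^ 2) ^ (q / 2))⁻¹ := by
    rw [← Real.rpow_neg (by positivity)]; ring_nf
  have hk4 : k ^ 4 = x ^ 2 := by rw [hxdef]; ring
  rw [hk4, hneg, ← div_eq_mul_inv, div_le_iff₀ hS]
  have hCval : (q * ε ^ 2 / (q - 4)) ^ ((q - 4) / 2)
      = q ^ ((q - 4) / 2) * ε ^ (q - 4) / (q - 4) ^ ((q - 4) / 2) := by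
    rw [Real.div_rpow (by positivity) (by positivity),
      Real.mul_rpow (by positivity) (by positivity)]
    congr 1
    rw [← Real.rpow_natCast ε 2, ← Real.rpow_mul hε.le]
    congr 1; push_cast; ring
  have e1 : q ^ (-q / 2) * q ^ ((q - 4) / 2) * q ^ 2 = 1 := by
    rw [show q ^ (2:ℕ) = q ^ ((2:ℕ):ℝ) from (Real.rpow_natCast q 2).symm,
      ← Real.rpow_add hq0, ← Real.rpow_add hq0,
      show (-q / 2 + (q - 4) / 2 + ((2:ℕ):ℝ)) = 0 from by push_cast; ring,
      Real.rpow_zero]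
  have e2 : (q - 4) ^ (q / 2 - 2) = (q - 4) ^ ((q - 4) / 2) := by
    congr 1; ring
  have e3 : ε ^ (4 - q) * ε ^ (q - 4) = 1 := by
    rw [← Real.rpow_add hε]; norm_num
  have e5 : (q - 4) ^ ((q - 4) / 2) ≠ 0 := by positivity
  have hfinal' : x ^ 2 * (q - 4) ^ ((q - 4) / 2)
      = M * ((q * x / 4) ^ (2:ℕ) * (q ^ ((q - 4) / 2) * ε ^ (q - 4))) := by
    rw [hM]
    linear_combination (-(x^2) * (q-4)^(q/2-2) * (ε^(4-q)*ε^(q-4))) * e1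
      + (-(x^2) * (q-4)^(q/2-2)) * e3 + (-(x^2)) * e2
  have hfinal : x ^ 2 = M * ((q * x / 4) ^ (2:ℝ) * (q * ε ^ 2 / (q - 4)) ^ ((q - 4) / 2)) := by
    rw [hCval, Real.rpow_two,
      show M * ((q * x / 4) ^ 2 * (q ^ ((q - 4) / 2) * ε ^ (q - 4) / (q - 4) ^ ((q - 4) / 2)))
        = M * ((q * x / 4) ^ 2 * (q ^ ((q - 4) / 2) * ε ^ (q - 4))) / (q - 4) ^ ((q - 4) / 2)
        from by ring,
      eq_div_iff e5]
    linear_combination hfinal'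
  calc x ^ 2 = M * ((q * x / 4) ^ (2:ℝ) * (q * ε ^ 2 / (q - 4)) ^ ((q - 4) / 2)) := hfinal
    _ ≤ M * (x + ε ^ 2) ^ (q / 2) := mul_le_mul_of_nonneg_left hpow hMpos.le

/-- upper bound in Lemma 2, estimate (1), for `q > 4`. -/
theorem stmt10 (t ε q κ : ℝ) (γ : ℝ → ℝ) (ht : t ≠ 0) (hε : 0 < ε)
    (hq : 4 < q) (hκ : 0 < κ)
    (hγlow : ∀ k : ℝ, |k| ≤ κ → (1 / 2) * |γ 0| ≤ |γ k|)
    (hγup : ∀ k : ℝ, |k| ≤ κ → |γ k| ≤ (3 / 2) * |γ 0|) :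
    ∀ k : ℝ, |k| ≤ κ →
      ε ^ q * (k ^ 2 + ε ^ 2) ^ (-q / 2) *
          |Real.sin ((1 / 2) * t * (ε ^ 2)⁻¹ * k ^ 4 * γ k)|
        ≤ 12 * q ^ (-q / 2) * (q - 4) ^ (q / 2 - 2) * |γ 0| * ε ^ (2:ℕ) * |t| := by
  intro k hk
  have hsin : |Real.sin ((1 / 2) * t * (ε ^ 2)⁻¹ * k ^ 4 * γ k)|
      ≤ (1 / 2) * |t| * (ε ^ 2)⁻¹ * k ^ 4 * |γ k| := by
    calc |Real.sin ((1 / 2) * t * (ε ^ 2)⁻¹ * k ^ 4 * γ k)|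
        ≤ |(1 / 2) * t * (ε ^ 2)⁻¹ * k ^ 4 * γ k| := Real.abs_sin_le_abs
      _ = (1 / 2) * |t| * (ε ^ 2)⁻¹ * k ^ 4 * |γ k| := by
          rw [abs_mul, abs_mul, abs_mul, abs_mul,
            abs_of_nonneg (show (0:ℝ) ≤ (ε ^ 2)⁻¹ by positivity),
            abs_of_nonneg (show (0:ℝ) ≤ k ^ 4 by positivity)]
          norm_num
  have hγ := hγup k hk
  have hnn : (0:ℝ) ≤ ε ^ q * (k ^ 2 + ε ^ 2) ^ (-q / 2) := by positivity
  have step1 : ε ^ q * (k ^ 2 + ε ^ 2) ^ (-q / 2) *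
          |Real.sin ((1 / 2) * t * (ε ^ 2)⁻¹ * k ^ 4 * γ k)|
      ≤ ε ^ q * (k ^ 2 + ε ^ 2) ^ (-q / 2) *
          ((1 / 2) * |t| * (ε ^ 2)⁻¹ * k ^ 4 * ((3/2) * |γ 0|)) := by
    apply mul_le_mul_of_nonneg_left _ hnn
    calc |Real.sin ((1 / 2) * t * (ε ^ 2)⁻¹ * k ^ 4 * γ k)|
        ≤ (1 / 2) * |t| * (ε ^ 2)⁻¹ * k ^ 4 * |γ k| := hsin
      _ ≤ (1 / 2) * |t| * (ε ^ 2)⁻¹ * k ^ 4 * ((3/2) * |γ 0|) := by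
          apply mul_le_mul_of_nonneg_left hγ
          positivity
  refine step1.trans ?_
  have hkb := key_bound ε q hε hq k
  have hq0 : (0:ℝ) < q := by linarith
  have hq4 : (0:ℝ) < q - 4 := by linarith
  have hc : (0:ℝ) ≤ (3/4) * |t| * (ε ^ 2)⁻¹ * |γ 0| * ε ^ q := by positivity
  have collapse : ε ^ q * (k ^ 2 + ε ^ 2) ^ (-q / 2) *
          ((1 / 2) * |t| * (ε ^ 2)⁻¹ * k ^ 4 * ((3/2) * |γ 0|))
      = (3/4) * |t| * (ε ^ 2)⁻¹ * |γ 0| * ε ^ q *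
          (k ^ 4 * (k ^ 2 + ε ^ 2) ^ (-q / 2)) := by ring
  rw [collapse]
  have step2 := mul_le_mul_of_nonneg_left hkb hc
  refine step2.trans_eq ?_
  have eε2 : ε ^ q * ε ^ (4 - q) * (ε ^ 2)⁻¹ = ε ^ (2:ℕ) := by
    rw [← Real.rpow_add hε,
      show q + (4 - q) = ((4:ℕ):ℝ) from by push_cast; ring,
      Real.rpow_natCast]
    field_simp
  linear_combination (12 * q ^ (-q / 2) * (q - 4) ^ (q / 2 - 2) * |t| * |γ 0|) * eε2
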